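/- Let M and B be finite-dimensional complex Hilbert spaces, let (p_m)_{m=1}^{|M|} be a probability distribution, let ξ_m be states on B, and set ξ^{MB} = ∑_m p_m |m⟩⟨m| ⊗ ξ_m, ξ^M = ∑_m p_m |m⟩⟨m|, ξ^B = ∑_m p_m ξ_m. Let 0 ≤ ε ≤ 1 and suppose that for every measurement superoperator 𝓜 on B one has ‖(id_M ⊗ 𝓜)(ξ^{MB}) − ξ^M ⊗ 𝓜(ξ^B)‖₁ ≤ ε. Then for every measurement superoperator on B with POVM elements N_1,…,N_K, the joint probability distribution q(m,i) = p_m·Tr[N_i ξ_m] satisfies I(M;X)_q ≤ 4ε·log₂|M| + 2η(1−ε) + 2η(ε), where η(x) = −x·log₂ x with η(0) = 0. In particular, the accessible information I_acc(M;B)_ξ, defined as the supremum of I(M;X)_q over all measurement superoperators on B, is at most 4ε·log₂|M| + 2η(1−ε) + 2η(ε). -/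

import Mathlib

open scoped BigOperators Kronecker Classical ComplexOrder
open Matrix MeasureTheory

noncomputable section

/-- Outer product `|v⟩⟨v|`. -/
def outer {A : Type*} [Fintype A] (v : A → ℂ) : Matrix A A ℂ :=
  Matrix.of fun i j => v i * star (v j)

/-- Trace norm `‖X‖₁ = Tr √(XᴴX)`. -/
def traceNorm {A : Type*} [Fintype A] [DecidableEq A] (X : Matrix A A ℂ) : ℝ :=
  (((Matrix.posSemidef_conjTranspose_mul_self X).1.eigenvectorUnitary : Matrix A A ℂ) *
      Matrix.diagonal (((↑) : ℝ → ℂ) ∘ (Real.sqrt ∘ (Matrix.posSemidef_conjTranspose_mul_self X).1.eigenvalues)) *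
      (star (Matrix.posSemidef_conjTranspose_mul_self X).1.eigenvectorUnitary : Matrix A A ℂ)).trace.re

/-- Frobenius norm `‖X‖₂`. -/
def frobNorm {A : Type*} [Fintype A] (X : Matrix A A ℂ) : ℝ :=
  Real.sqrt ((Xᴴ * X).trace.re)

/-- Operator norm (largest singular value) `‖X‖_∞`. -/
def opNorm {A : Type*} [Fintype A] [DecidableEq A] (X : Matrix A A ℂ) : ℝ :=
  ‖Matrix.toEuclideanCLM (𝕜 := ℂ) X‖

instance matrixMeasurableSpace {m n : Type*} : MeasurableSpace (Matrix m n ℂ) :=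
  inferInstanceAs (MeasurableSpace (m → n → ℂ))

/-- A measurement superoperator (given by its POVM elements `Ms`) applied to the second
factor of a bipartite operator, tensored with the identity on the first factor `W`. -/
def measApply {W A X : Type*} [Fintype A] [DecidableEq X]
    (Ms : X → Matrix A A ℂ) (ρ : Matrix (W × A) (W × A) ℂ) :
    Matrix (W × X) (W × X) ℂ :=
  Matrix.of fun p q =>
    if p.2 = q.2 then ∑ a : A, ∑ a' : A, Ms p.2 a a' * ρ (p.1, a') (q.1, a) else 0

/-- A measurement superoperator applied to an operator (no side register). -/
def measApply0 {A X : Type*} [Fintype A] [DecidableEq X]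
    (Ms : X → Matrix A A ℂ) (ρ : Matrix A A ℂ) : Matrix X X ℂ :=
  Matrix.of fun i j => if i = j then ∑ a : A, ∑ a' : A, Ms i a a' * ρ a' a else 0

/-- The elements `Ms` form a POVM: each is positive semidefinite and they sum to `I`. -/
def IsPOVM {A X : Type*} [Fintype A] [Fintype X] [DecidableEq A]
    (Ms : X → Matrix A A ℂ) : Prop :=
  (∀ i, (Ms i).PosSemidef) ∧ ∑ i, Ms i = 1

/-- The tuple of unit vectors `χ` defines an `(s,η)`-quasi-measurement:
`(|A|/s) ∑ᵢ |χᵢ⟩⟨χᵢ| ≤ η I`. -/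
def IsQuasiTuple {A : Type*} [Fintype A] [DecidableEq A] (s : ℕ) (η : ℝ)
    (χ : Fin s → A → ℂ) : Prop :=
  (∀ i, ∑ a, Complex.normSq (χ i a) = 1) ∧
  ((η : ℂ) • (1 : Matrix A A ℂ) -
    ((Fintype.card A : ℂ) / (s : ℂ)) • ∑ i, outer (χ i)).PosSemidef

/-- The kernel elements `(|A|/s)|χᵢ⟩⟨χᵢ|` of an `(s,η)`-quasi-measurement. -/
def quasiKernel {A : Type*} [Fintype A] (s : ℕ) (χ : Fin s → A → ℂ) :
    Fin s → Matrix A A ℂ :=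
  fun i => ((Fintype.card A : ℂ) / (s : ℂ)) • outer (χ i)

/-- `η(x) = −x·log₂ x` (with `η(0) = 0`, since `Real.logb 2 0 = 0`). -/
def etaFn (x : ℝ) : ℝ := -(x * Real.logb 2 x)

/-- Mutual information (base 2) of a finitely supported joint distribution `q`,
with `0·log(·) = 0` convention. -/
def mutInfo {M X : Type*} [Fintype M] [Fintype X] (q : M → X → ℝ) : ℝ :=
  ∑ m, ∑ i, q m i * Real.logb 2 (q m i / ((∑ i', q m i') * (∑ m', q m' i)))


namespace LockingAux

open Real

lemma negMulLog_shift_antitone {t : ℝ} (ht0 : 0 ≤ t) :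
    AntitoneOn (fun a => negMulLog (a + t) - negMulLog a) (Set.Icc 0 (1 - t)) := by
  rcases eq_or_lt_of_le ht0 with h | h
  · simp [← h]
    exact antitoneOn_const
  · apply antitoneOn_of_deriv_nonpos (convex_Icc _ _)
    · exact ((continuous_negMulLog.comp (continuous_id.add continuous_const)).sub
        continuous_negMulLog).continuousOn
    · intro a ha
      rw [interior_Icc] at ha
      have h1 : HasDerivAt (fun a => negMulLog (a + t)) (-log (a + t) - 1) a := by
        have := (hasDerivAt_negMulLog (x := a + t) (by nlinarith [ha.1])).comp a
          ((hasDerivAt_id a).add_const t)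
        simpa [Function.comp_def] using this
      exact ((h1.sub (hasDerivAt_negMulLog (ne_of_gt ha.1))).differentiableAt).differentiableWithinAt
    · intro a ha
      rw [interior_Icc] at ha
      have h1 : HasDerivAt (fun a => negMulLog (a + t)) (-log (a + t) - 1) a := by
        have := (hasDerivAt_negMulLog (x := a + t) (by nlinarith [ha.1])).comp a
          ((hasDerivAt_id a).add_const t)
        simpa [Function.comp_def] using this
      rw [show (fun a => negMulLog (a + t) - negMulLog a) = (fun a => negMulLog (a + t)) - negMulLog
        from rfl, (h1.sub (hasDerivAt_negMulLog (ne_of_gt ha.1))).deriv]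
      have : log a ≤ log (a + t) := Real.log_le_log ha.1 (by linarith)
      linarith

lemma negMulLog_sub_le_binEntropy : ∀ x y : ℝ, 0 ≤ x → x ≤ 1 → 0 ≤ y → y ≤ 1 →
    negMulLog x - negMulLog y ≤ binEntropy |x - y| := by
  intro x y hx0 hx1 hy0 hy1
  rcases le_total y x with h | h
  · have ht : |x - y| = x - y := abs_of_nonneg (by linarith)
    rw [ht]
    set t := x - y with htdef
    have ht0 : 0 ≤ t := by linarith
    have ht1 : t ≤ 1 := by linarith
    have key := negMulLog_shift_antitone ht0 (Set.mem_Icc.mpr ⟨le_refl 0, by linarith⟩)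
      (Set.mem_Icc.mpr ⟨hy0, by linarith⟩) hy0
    simp only [zero_add, negMulLog_zero, sub_zero] at key
    have hxy : y + t = x := by ring
    rw [hxy] at key
    have : negMulLog t ≤ binEntropy t := by
      rw [binEntropy_eq_negMulLog_add_negMulLog_one_sub]
      have := negMulLog_nonneg (by linarith : (0:ℝ) ≤ 1 - t) (by linarith)
      linarith
    linarith
  · have ht : |x - y| = y - x := by rw [abs_of_nonpos (by linarith : x - y ≤ 0)]; ring
    rw [ht]
    set t := y - x with htdef
    have ht0 : 0 ≤ t := by linarith
    have key := negMulLog_shift_antitone ht0 (Set.mem_Icc.mpr ⟨hx0, by linarith⟩)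
      (Set.mem_Icc.mpr ⟨by linarith, le_refl (1 - t)⟩) (by linarith)
    simp only at key
    rw [(by ring : (1:ℝ) - t + t = 1), (by rw [htdef]; ring : x + t = y)] at key
    simp only [negMulLog_one] at key
    have : negMulLog (1 - t) ≤ binEntropy t := by
      rw [binEntropy_eq_negMulLog_add_negMulLog_one_sub]
      have := negMulLog_nonneg ht0 (by linarith)
      linarith
    linarith

lemma classical_bound {d K : ℕ} (hd : 2 ≤ d) (q : Fin d → Fin K → ℝ)
    (P : Fin d → ℝ) (R : Fin K → ℝ)
    (hPdef : ∀ m, P m = ∑ i, q m i) (hRdef : ∀ i, R i = ∑ m, q m i)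
    (hq0 : ∀ m i, 0 ≤ q m i) (htot : ∑ m, ∑ i, q m i = 1)
    (ε : ℝ) (hε0 : 0 ≤ ε) (hε1 : ε ≤ 1)
    (hδ : ∑ m, ∑ i, |q m i - P m * R i| ≤ ε) :
    ∑ m, ∑ i, q m i * Real.log (q m i / (P m * R i))
      ≤ 4 * ε * Real.log d + 2 * Real.binEntropy ε := by
  have hent := negMulLog_sub_le_binEntropy
  have hP0 : ∀ m, 0 ≤ P m := fun m => (hPdef m) ▸ Finset.sum_nonneg fun i _ => hq0 m i
  have hR0 : ∀ i, 0 ≤ R i := fun i => (hRdef i) ▸ Finset.sum_nonneg fun m _ => hq0 m i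
  have hqP : ∀ m i, q m i ≤ P m := fun m i =>
    (hPdef m) ▸ Finset.single_le_sum (fun j _ => hq0 m j) (Finset.mem_univ i)
  have hqR : ∀ m i, q m i ≤ R i := fun m i =>
    (hRdef i) ▸ Finset.single_le_sum (fun j _ => hq0 j i) (Finset.mem_univ m)
  have hPsum : ∑ m, P m = 1 := by simp_rw [hPdef]; exact htot
  have hRsum : ∑ i, R i = 1 := by simp_rw [hRdef]; rw [← htot]; exact Finset.sum_comm
  have hP1 : ∀ m, P m ≤ 1 := fun m => by
    rw [← hPsum]; exact Finset.single_le_sum (fun j _ => hP0 j) (Finset.mem_univ m)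
  have hd0 : (0:ℝ) < d := by
    have : (2:ℝ) ≤ d := by exact_mod_cast hd
    linarith
  set u : Fin d → Fin K → ℝ := fun m i => q m i / R i with hu
  have hu0 : ∀ m i, 0 ≤ u m i := fun m i => div_nonneg (hq0 m i) (hR0 i)
  have hu1 : ∀ m i, u m i ≤ 1 := by
    intro m i
    rcases eq_or_lt_of_le (hR0 i) with h | h
    · simp [hu, ← h]
    · exact div_le_one_of_le₀ (hqR m i) (le_of_lt h)
  have key1 : ∀ m i, q m i * Real.log (q m i / (P m * R i))
      = -(R i * negMulLog (u m i)) - q m i * Real.log (P m) := by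
    intro m i
    rcases eq_or_lt_of_le (hq0 m i) with h0 | h0
    · rcases eq_or_ne (R i) 0 with hri | hri
      · simp [hu, ← h0, hri]
      · simp [hu, ← h0]
    · have hPm : 0 < P m := lt_of_lt_of_le h0 (hqP m i)
      have hRi : 0 < R i := lt_of_lt_of_le h0 (hqR m i)
      rw [negMulLog]
      have hlog : Real.log (q m i / (P m * R i))
          = Real.log (q m i) - Real.log (P m) - Real.log (R i) := by
        rw [Real.log_div (ne_of_gt h0) (by positivity), Real.log_mul (ne_of_gt hPm) (ne_of_gt hRi)]
        ring
      have hlogu : Real.log (u m i) = Real.log (q m i) - Real.log (R i) :=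
        Real.log_div (ne_of_gt h0) (ne_of_gt hRi)
      rw [hlog, hu]
      simp only []
      rw [hlogu]
      field_simp
      ring
  have step1 : ∑ m, ∑ i, q m i * Real.log (q m i / (P m * R i))
      = ∑ i, ∑ m, R i * (negMulLog (P m) - negMulLog (u m i)) := by
    have lhs : ∑ m, ∑ i, q m i * Real.log (q m i / (P m * R i))
        = (∑ m, negMulLog (P m)) - ∑ m, ∑ i, R i * negMulLog (u m i) := by
      have hm : ∀ m, ∑ i, q m i * Real.log (q m i / (P m * R i))
          = negMulLog (P m) - ∑ i, R i * negMulLog (u m i) := by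
        intro m
        rw [Finset.sum_congr rfl fun i _ => key1 m i, Finset.sum_sub_distrib,
          ← Finset.sum_mul, ← hPdef m, negMulLog, Finset.sum_neg_distrib]
        ring
      rw [Finset.sum_congr rfl fun m _ => hm m, Finset.sum_sub_distrib]
    have rhs : ∑ i, ∑ m, R i * (negMulLog (P m) - negMulLog (u m i))
        = (∑ m, negMulLog (P m)) - ∑ m, ∑ i, R i * negMulLog (u m i) := by
      simp_rw [mul_sub, Finset.sum_sub_distrib]
      congr 1
      · rw [Finset.sum_comm]
        refine Finset.sum_congr rfl fun m _ => ?_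
        rw [← Finset.sum_mul, hRsum, one_mul]
      · exact Finset.sum_comm
    rw [lhs, rhs]
  have step2 : ∑ i, ∑ m, R i * (negMulLog (P m) - negMulLog (u m i))
      ≤ ∑ i, ∑ m, R i * binEntropy |P m - u m i| := by
    refine Finset.sum_le_sum fun i _ => Finset.sum_le_sum fun m _ => ?_
    exact mul_le_mul_of_nonneg_left
      (hent _ _ (hP0 m) (hP1 m) (hu0 m i) (hu1 m i)) (hR0 i)
  set δ : ℝ := ∑ m, ∑ i, |q m i - P m * R i| with hδdef
  have hδ0 : 0 ≤ δ := Finset.sum_nonneg fun m _ => Finset.sum_nonneg fun i _ => abs_nonneg _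
  have hδε : δ ≤ ε := hδ
  have hwx : ∀ m i, (R i / d) * |P m - u m i| = |q m i - P m * R i| / d := by
    intro m i
    rcases eq_or_ne (R i) 0 with h | h
    · have hq : q m i = 0 := le_antisymm (h ▸ hqR m i) (hq0 m i)
      simp [h, hq]
    · have hkey : R i * (P m - u m i) = -(q m i - P m * R i) := by
        simp only [hu]; field_simp; try ring
      calc R i / (d:ℝ) * |P m - u m i| = |R i * (P m - u m i)| / d := by
            rw [abs_mul, abs_of_nonneg (hR0 i)]; ring
        _ = |q m i - P m * R i| / d := by rw [hkey, abs_neg]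
  have jensen : ∑ i, ∑ m, R i * binEntropy |P m - u m i| ≤ d * binEntropy (δ / d) := by
    have hcon : ConcaveOn ℝ (Set.Icc 0 1) binEntropy := strictConcave_binEntropy.concaveOn
    have hw0 : ∀ mi ∈ (Finset.univ : Finset (Fin d × Fin K)), 0 ≤ R mi.2 / (d:ℝ) :=
      fun mi _ => div_nonneg (hR0 mi.2) (le_of_lt hd0)
    have hw1 : ∑ mi : Fin d × Fin K, R mi.2 / (d:ℝ) = 1 := by
      rw [Fintype.sum_prod_type]
      simp_rw [← Finset.sum_div, hRsum]
      simp [Finset.card_univ]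
      omega
    have hmem : ∀ mi ∈ (Finset.univ : Finset (Fin d × Fin K)),
        |P mi.1 - u mi.1 mi.2| ∈ Set.Icc (0:ℝ) 1 := by
      intro mi _
      refine ⟨abs_nonneg _, abs_le.mpr ⟨?_, ?_⟩⟩
      · have := hP0 mi.1; have := hu1 mi.1 mi.2; linarith
      · have := hP1 mi.1; have := hu0 mi.1 mi.2; linarith
    have hJ := hcon.le_map_sum hw0 hw1 hmem
    simp only [smul_eq_mul] at hJ
    have hsum1 : ∑ mi : Fin d × Fin K, R mi.2 / (d:ℝ) * |P mi.1 - u mi.1 mi.2| = δ / d := by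
      rw [Fintype.sum_prod_type]
      simp_rw [hwx, hδdef, Finset.sum_div]
    rw [hsum1] at hJ
    have hsum2 : ∑ i, ∑ m, R i * binEntropy |P m - u m i|
        = d * ∑ mi : Fin d × Fin K, R mi.2 / (d:ℝ) * binEntropy |P mi.1 - u mi.1 mi.2| := by
      rw [Fintype.sum_prod_type, Finset.mul_sum, Finset.sum_comm]
      refine Finset.sum_congr rfl fun i _ => ?_
      rw [Finset.mul_sum]
      refine Finset.sum_congr rfl fun m _ => ?_
      field_simp
    rw [hsum2]
    exact mul_le_mul_of_nonneg_left hJ (le_of_lt hd0)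
  have hhalf : ε / d ≤ 2⁻¹ := by
    rw [div_le_iff₀ hd0]
    have : (2:ℝ) ≤ d := by exact_mod_cast hd
    nlinarith
  have mono : binEntropy (δ / d) ≤ binEntropy (ε / d) := by
    have h1 : δ / d ∈ Set.Icc (0:ℝ) 2⁻¹ := ⟨div_nonneg hδ0 (le_of_lt hd0),
      le_trans (by gcongr) hhalf⟩
    have h2 : ε / d ∈ Set.Icc (0:ℝ) 2⁻¹ := ⟨div_nonneg hε0 (le_of_lt hd0), hhalf⟩
    exact binEntropy_strictMonoOn.monotoneOn h1 h2 (by gcongr)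
  have final : (d:ℝ) * binEntropy (ε / d) ≤ 4 * ε * Real.log d + 2 * binEntropy ε := by
    rcases eq_or_lt_of_le hε0 with h0 | h0
    · rw [← h0]
      simp
    · have e1 : (d:ℝ) * negMulLog (ε / d) = ε * Real.log d + negMulLog ε := by
        rw [negMulLog, negMulLog, Real.log_div (ne_of_gt h0) (ne_of_gt hd0)]
        field_simp
        ring
      have hx1 : 0 < 1 - ε / d := by
        have : ε / d ≤ 2⁻¹ := hhalf
        linarith
      have e2 : (d:ℝ) * negMulLog (1 - ε / d) ≤ ε := by
        have hlog : -Real.log (1 - ε / d) ≤ (ε / d) / (1 - ε / d) := by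
          have h := Real.log_le_sub_one_of_pos (inv_pos.mpr hx1)
          rw [Real.log_inv] at h
          have h2 : -Real.log (1 - ε / d) ≤ (1 - ε / d)⁻¹ - 1 := by linarith
          have hdε : 0 < (d:ℝ) - ε := by
            have hm := mul_pos hd0 hx1
            rw [mul_sub, mul_one, mul_div_cancel₀ _ (ne_of_gt hd0)] at hm
            exact hm
          have h3 : (1 - ε / d)⁻¹ - 1 = (ε / d) / (1 - ε / d) := by
            rw [eq_div_iff (ne_of_gt hx1), sub_mul, inv_mul_cancel₀ (ne_of_gt hx1)]
            ring
          linarith [h3 ▸ h2]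
        have : negMulLog (1 - ε / d) = (1 - ε / d) * (-Real.log (1 - ε / d)) := by
          rw [negMulLog]; ring
        rw [this]
        calc (d:ℝ) * ((1 - ε / d) * (-Real.log (1 - ε / d)))
            ≤ (d:ℝ) * ((1 - ε / d) * ((ε / d) / (1 - ε / d))) := by
              refine mul_le_mul_of_nonneg_left
                (mul_le_mul_of_nonneg_left hlog (le_of_lt hx1)) (le_of_lt hd0)
          _ = ε := by
              have hdε : ((d:ℝ) - ε) ≠ 0 := by
                have hm := mul_pos hd0 hx1
                rw [mul_sub, mul_one, mul_div_cancel₀ _ (ne_of_gt hd0)] at hm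
                exact ne_of_gt hm
              field_simp
      have e3 : negMulLog ε ≤ binEntropy ε := by
        rw [binEntropy_eq_negMulLog_add_negMulLog_one_sub]
        have := negMulLog_nonneg (by linarith : (0:ℝ) ≤ 1 - ε) (by linarith)
        linarith
      have e4 : ε ≤ 3 * ε * Real.log d := by
        have hl2 : Real.log 2 ≤ Real.log d := Real.log_le_log two_pos (by exact_mod_cast hd)
        nlinarith [Real.log_two_gt_d9]
      have e5 : 0 ≤ binEntropy ε := binEntropy_nonneg hε0 hε1
      calc (d:ℝ) * binEntropy (ε / d)
          = (d:ℝ) * negMulLog (ε / d) + (d:ℝ) * negMulLog (1 - ε / d) := by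
            rw [binEntropy_eq_negMulLog_add_negMulLog_one_sub]; ring
        _ ≤ ε * Real.log d + negMulLog ε + ε := by linarith
        _ ≤ 4 * ε * Real.log d + 2 * binEntropy ε := by linarith
  have hmono2 : (d:ℝ) * binEntropy (δ / d) ≤ (d:ℝ) * binEntropy (ε / d) :=
    mul_le_mul_of_nonneg_left mono (le_of_lt hd0)
  linarith [step1 ▸ (le_trans step2 (le_trans jensen (le_trans hmono2 final)))]

end LockingAux


namespace LockingAux

lemma mutInfo_le_of_close {d K : ℕ} (q : Fin d → Fin K → ℝ)
    (P : Fin d → ℝ) (R : Fin K → ℝ)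
    (hPdef : ∀ m, P m = ∑ i, q m i) (hRdef : ∀ i, R i = ∑ m, q m i)
    (hq0 : ∀ m i, 0 ≤ q m i) (htot : ∑ m, ∑ i, q m i = 1)
    (ε : ℝ) (hε0 : 0 ≤ ε) (hε1 : ε ≤ 1)
    (hδ : ∑ m, ∑ i, |q m i - P m * R i| ≤ ε) :
    mutInfo q ≤ 4 * ε * Real.logb 2 d + 2 * etaFn (1 - ε) + 2 * etaFn ε := by
  have hlog2 : (0:ℝ) < Real.log 2 := Real.log_pos one_lt_two
  have heta : etaFn (1 - ε) + etaFn ε = Real.binEntropy ε / Real.log 2 := by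
    rw [etaFn, etaFn, Real.logb, Real.logb,
      Real.binEntropy_eq_negMulLog_add_negMulLog_one_sub, Real.negMulLog, Real.negMulLog]
    field_simp
    ring
  have hmut : mutInfo q
      = (∑ m, ∑ i, q m i * Real.log (q m i / (P m * R i))) / Real.log 2 := by
    rw [mutInfo]
    simp_rw [Real.logb, ← hPdef, ← hRdef]
    rw [Finset.sum_div]
    refine Finset.sum_congr rfl fun m _ => ?_
    rw [Finset.sum_div]
    refine Finset.sum_congr rfl fun i _ => ?_
    ring
  have hbin0 : 0 ≤ Real.binEntropy ε := Real.binEntropy_nonneg hε0 hε1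
  have key : ∑ m, ∑ i, q m i * Real.log (q m i / (P m * R i))
      ≤ 4 * ε * Real.log d + 2 * Real.binEntropy ε := by
    rcases lt_or_ge d 2 with hd | hd
    · interval_cases d
      · simp only [Nat.cast_zero, Real.log_zero, mul_zero]
        have : (∑ m : Fin 0, ∑ i : Fin K, q m i * Real.log (q m i / (P m * R i))) = 0 := by
          simp
        rw [this]
        linarith
      · have htot1 : ∑ i, q 0 i = 1 := by
          rw [← htot, Fin.sum_univ_one]
        have hL : ∀ i, q 0 i * Real.log (q 0 i / (P 0 * R i)) = 0 := by
          intro i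
          rcases eq_or_lt_of_le (hq0 0 i) with h0 | h0
          · rw [← h0, zero_mul]
          · have hRi : R i = q 0 i := by rw [hRdef]; exact Fin.sum_univ_one _
            have hP : P 0 = 1 := by rw [hPdef]; exact htot1
            rw [hP, hRi, one_mul, div_self (ne_of_gt h0), Real.log_one, mul_zero]
        have : (∑ m : Fin 1, ∑ i : Fin K, q m i * Real.log (q m i / (P m * R i))) = 0 := by
          rw [Fin.sum_univ_one, Finset.sum_congr rfl fun i _ => hL i, Finset.sum_const,
            smul_zero]
        rw [this]
        simp only [Nat.cast_one, Real.log_one, mul_zero]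
        linarith
    · exact classical_bound hd q P R hPdef hRdef hq0 htot ε hε0 hε1 hδ
  have hRHS : 4 * ε * Real.logb 2 d + 2 * etaFn (1 - ε) + 2 * etaFn ε
      = (4 * ε * Real.log d + 2 * Real.binEntropy ε) / Real.log 2 := by
    calc 4 * ε * Real.logb 2 d + 2 * etaFn (1 - ε) + 2 * etaFn ε
        = 4 * ε * (Real.log d / Real.log 2) + 2 * (etaFn (1 - ε) + etaFn ε) := by
          rw [Real.logb]; ring
      _ = 4 * ε * (Real.log d / Real.log 2) + 2 * (Real.binEntropy ε / Real.log 2) := by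
          rw [heta]
      _ = (4 * ε * Real.log d + 2 * Real.binEntropy ε) / Real.log 2 := by ring
  rw [hmut, hRHS]
  gcongr

lemma trace_sum_expr {n : Type*} [Fintype n] (N ρ : Matrix n n ℂ) :
    ∑ a, ∑ a', N a a' * ρ a' a = (N * ρ).trace := by
  rw [Matrix.trace]
  refine Finset.sum_congr rfl fun a _ => ?_
  rw [Matrix.diag_apply, Matrix.mul_apply]

lemma diag_entry_nonneg {n : Type*} [Fintype n] [DecidableEq n] {M : Matrix n n ℂ}
    (h : M.PosSemidef) (i : n) : 0 ≤ M i i := by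
  exact h.diag_nonneg

lemma psd_trace_nonneg {n : Type*} [Fintype n] [DecidableEq n] {M : Matrix n n ℂ}
    (h : M.PosSemidef) : 0 ≤ M.trace := by
  rw [Matrix.trace]
  exact Finset.sum_nonneg fun i _ => diag_entry_nonneg h i

open scoped MatrixOrder in
lemma psd_mul_trace_nonneg {n : Type*} [Fintype n] [DecidableEq n] {A B : Matrix n n ℂ}
    (hA : A.PosSemidef) (hB : B.PosSemidef) : 0 ≤ (A * B).trace := by
  rw [← CFC.sqrt_mul_sqrt_self B hB.nonneg, ← mul_assoc, Matrix.trace_mul_comm, ← mul_assoc]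
  have h := hA.conjTranspose_mul_mul_same (CFC.sqrt B)
  rw [(CFC.sqrt_nonneg B).posSemidef.1] at h
  exact psd_trace_nonneg h

lemma cplx_eq_re {z : ℂ} (h : 0 ≤ z) : z = ((z.re : ℝ) : ℂ) := by
  rw [Complex.le_def] at h
  exact Complex.ext (by simp) (by simpa using h.2.symm)

open scoped MatrixOrder in
lemma traceNorm_diagonal_real {n : Type*} [Fintype n] [DecidableEq n] (z : n → ℝ) :
    traceNorm (Matrix.diagonal fun k => (z k : ℂ)) = ∑ k, |z k| := by
  have hA : (Matrix.diagonal fun k => ((|z k| : ℝ) : ℂ)).PosSemidef :=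
    Matrix.PosSemidef.diagonal (by
      intro k
      exact Complex.zero_le_real.mpr (abs_nonneg _))
  have hsq : (Matrix.diagonal fun k => ((|z k| : ℝ) : ℂ)) ^ 2
      = (Matrix.diagonal fun k => (z k : ℂ))ᴴ * (Matrix.diagonal fun k => (z k : ℂ)) := by
    rw [pow_two, Matrix.diagonal_conjTranspose, Matrix.diagonal_mul_diagonal,
      Matrix.diagonal_mul_diagonal]
    exact congrArg Matrix.diagonal (funext fun k => by
      simp only [Pi.star_apply, Complex.star_def, Complex.conj_ofReal]
      rw [← Complex.ofReal_mul, ← Complex.ofReal_mul, abs_mul_abs_self])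
  have hsq' : (Matrix.diagonal fun k => ((|z k| : ℝ) : ℂ)) * (Matrix.diagonal fun k => ((|z k| : ℝ) : ℂ))
      = (Matrix.diagonal fun k => (z k : ℂ))ᴴ * (Matrix.diagonal fun k => (z k : ℂ)) := by
    rw [← pow_two]; exact hsq
  have hP := Matrix.posSemidef_conjTranspose_mul_self (Matrix.diagonal fun k => (z k : ℂ))
  have heq : CFC.sqrt ((Matrix.diagonal fun k => (z k : ℂ))ᴴ * (Matrix.diagonal fun k => (z k : ℂ)))
      = Matrix.diagonal fun k => ((|z k| : ℝ) : ℂ) :=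
    (CFC.sqrt_eq_iff _ _ hP.nonneg hA.nonneg).mpr hsq'
  have hcfc : (hP.1.eigenvectorUnitary : Matrix n n ℂ) *
      Matrix.diagonal (((↑) : ℝ → ℂ) ∘ (Real.sqrt ∘ hP.1.eigenvalues)) *
      (star hP.1.eigenvectorUnitary : Matrix n n ℂ)
      = CFC.sqrt ((Matrix.diagonal fun k => (z k : ℂ))ᴴ * (Matrix.diagonal fun k => (z k : ℂ))) := by
    rw [CFC.sqrt_eq_cfc, cfc_nnreal_eq_real _ _ hP.nonneg, hP.1.cfc_eq, Matrix.IsHermitian.cfc,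
      Unitary.conjStarAlgAut_apply]
    congr 3
    funext x
    simp only [Function.comp_apply]
    rw [Real.coe_sqrt, Real.coe_toNNReal _ (hP.eigenvalues_nonneg x)]
    rfl
  rw [traceNorm, hcfc, heq, Matrix.trace_diagonal, Complex.re_sum]
  simp

end LockingAux

/-- The trace-distance form of locking bounds the accessible information
(Lemma `lem:alicki-fannes`): any measurement on `B` yields outcomes whose mutual
information with `M` is at most `4ε log|M| + 2η(1−ε) + 2η(ε)`. -/
theorem locking_bounds_accessible_information
    (dM dB : ℕ)
    (p : Fin dM → ℝ) (hp0 : ∀ m, 0 ≤ p m) (hp1 : ∑ m, p m = 1)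
    (ξ : Fin dM → Matrix (Fin dB) (Fin dB) ℂ)
    (hξ : ∀ m, (ξ m).PosSemidef ∧ (ξ m).trace = 1)
    (ε : ℝ) (hε0 : 0 ≤ ε) (hε1 : ε ≤ 1)
    (hlock : ∀ (NX : ℕ) (Ms : Fin NX → Matrix (Fin dB) (Fin dB) ℂ), IsPOVM Ms →
      traceNorm
        (measApply Ms (Matrix.of fun (x : Fin dM × Fin dB) (y : Fin dM × Fin dB) =>
            if x.1 = y.1 then (p x.1 : ℂ) * ξ x.1 x.2 y.2 else 0)
          - (Matrix.diagonal fun m => (p m : ℂ)) ⊗ₖ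
              measApply0 Ms (∑ m, (p m : ℂ) • ξ m)) ≤ ε) :
    ∀ (KX : ℕ) (Ns : Fin KX → Matrix (Fin dB) (Fin dB) ℂ), IsPOVM Ns →
      mutInfo (fun (m : Fin dM) (i : Fin KX) =>
          p m * (∑ a, ∑ a', Ns i a a' * ξ m a' a).re)
        ≤ 4 * ε * Real.logb 2 (dM : ℝ) + 2 * etaFn (1 - ε) + 2 * etaFn ε := by
  intro KX Ns hNs
  classical
  set q : Fin dM → Fin KX → ℝ :=
    fun m i => p m * (∑ a, ∑ a', Ns i a a' * ξ m a' a).re with hqdef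
  have hqtr : ∀ m i, q m i = p m * ((Ns i * ξ m).trace).re := by
    intro m i
    rw [hqdef]
    simp only
    rw [LockingAux.trace_sum_expr]
  have htrpos : ∀ m i, 0 ≤ (Ns i * ξ m).trace := fun m i =>
    LockingAux.psd_mul_trace_nonneg (hNs.1 i) (hξ m).1
  have htre : ∀ m i, (Ns i * ξ m).trace = ((((Ns i * ξ m).trace).re : ℝ) : ℂ) := fun m i =>
    LockingAux.cplx_eq_re (htrpos m i)
  have htre0 : ∀ m i, 0 ≤ ((Ns i * ξ m).trace).re := by
    intro m i
    have h := htrpos m i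
    rw [Complex.le_def] at h
    simpa using h.1
  have hq0 : ∀ m i, 0 ≤ q m i := fun m i => by
    rw [hqtr]; exact mul_nonneg (hp0 m) (htre0 m i)
  have hrow : ∀ m, ∑ i, ((Ns i * ξ m).trace).re = 1 := by
    intro m
    have h1 : ∑ i, (Ns i * ξ m).trace = 1 := by
      rw [← Matrix.trace_sum, ← Finset.sum_mul, hNs.2, one_mul, (hξ m).2]
    have h2 := congrArg Complex.re h1
    rw [Complex.re_sum] at h2
    simpa using h2
  have hPq : ∀ m, p m = ∑ i, q m i := by
    intro m
    simp_rw [hqtr]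
    rw [← Finset.mul_sum, hrow, mul_one]
  have htot : ∑ m, ∑ i, q m i = 1 := by
    rw [← hp1]
    exact (Finset.sum_congr rfl fun m _ => (hPq m).symm)
  set R : Fin KX → ℝ := fun i => ∑ m, q m i with hRdef
  have hTN := hlock KX Ns hNs
  have hdiag : measApply Ns (Matrix.of fun (x : Fin dM × Fin dB) (y : Fin dM × Fin dB) =>
          if x.1 = y.1 then (p x.1 : ℂ) * ξ x.1 x.2 y.2 else 0)
        - (Matrix.diagonal fun m => (p m : ℂ)) ⊗ₖ
            measApply0 Ns (∑ m, (p m : ℂ) • ξ m)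
      = Matrix.diagonal
          (fun mi : Fin dM × Fin KX => ((q mi.1 mi.2 - p mi.1 * R mi.2 : ℝ) : ℂ)) := by
    ext ⟨m, i⟩ ⟨m', i'⟩
    simp only [Matrix.sub_apply, measApply, measApply0, Matrix.of_apply,
      Matrix.kroneckerMap_apply, Matrix.diagonal_apply, Prod.mk.injEq]
    by_cases him : i = i'
    · by_cases hm : m = m'
      · subst him; subst hm
        simp only [if_pos rfl, and_self, if_true]
        have hL : ∑ a, ∑ a', Ns i a a' * ((p m : ℂ) * ξ m a' a)
            = ((q m i : ℝ) : ℂ) := by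
          have : ∀ a a', Ns i a a' * ((p m : ℂ) * ξ m a' a)
              = (p m : ℂ) * (Ns i a a' * ξ m a' a) := fun a a' => by ring
          simp_rw [this, ← Finset.mul_sum]
          rw [LockingAux.trace_sum_expr, htre m i, hqtr]
          push_cast
          ring
        have hRi : ∑ a, ∑ a', Ns i a a' * ((∑ m'', (p m'' : ℂ) • ξ m'') a' a)
            = ((R i : ℝ) : ℂ) := by
          rw [LockingAux.trace_sum_expr, Matrix.mul_sum, Matrix.trace_sum,
            show R i = ∑ m'', q m'' i from rfl]
          push_cast
          refine Finset.sum_congr rfl fun m'' _ => ?_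
          rw [Matrix.mul_smul, Matrix.trace_smul, htre m'' i, hqtr m'' i]
          push_cast
          simp only [smul_eq_mul]
        rw [hL, hRi]
        push_cast
        ring
      · simp [hm]
    · simp [him, fun h : m = m' ∧ i = i' => him h.2]
  rw [hdiag, LockingAux.traceNorm_diagonal_real, Fintype.sum_prod_type] at hTN
  exact LockingAux.mutInfo_le_of_close q p R hPq (fun i => rfl) hq0 htot ε hε0 hε1 hTN
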